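/- Let M ∈ ℝ^{n_f×r} be a test-point feature matrix and let σ ∈ ℝ^{n_con} have all σ_j > 0. Assume the posterior covariance matrix Σ_σ := M S_σ⁻¹ Mᵀ ∈ ℝ^{n_f×n_f} is positive definite. Then for every feasible θ ∈ ℝ^r, the prediction error lies in the ellipsoid (M θ − M θ^μ_σ)ᵀ Σ_σ⁻¹ (M θ − M θ^μ_σ) ≤ β_σ². (Finite-dimensional form of Corollary 1: distribution-free ellipsoidal uncertainty bound for multivariate kernel regression, valid for every σ.) -/

import Mathlib

open Matrix

section aux
variable {n m : ℕ}

private lemma herm_transpose {A : Matrix (Fin n) (Fin n) ℝ} (h : A.IsHermitian) : Aᵀ = A := by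
  ext i j; simpa using congrFun (congrFun h i) j

private lemma dp_symm (A : Matrix (Fin n) (Fin n) ℝ) (hA : Aᵀ = A) (v w : Fin n → ℝ) :
    v ⬝ᵥ A *ᵥ w = w ⬝ᵥ A *ᵥ v := by
  rw [dotProduct_mulVec, ← mulVec_transpose, hA, dotProduct_comm]

private lemma mv_dot (B : Matrix (Fin n) (Fin m) ℝ) (u : Fin m → ℝ) (v : Fin n → ℝ) :
    (B *ᵥ u) ⬝ᵥ v = u ⬝ᵥ (Bᵀ *ᵥ v) := by
  rw [dotProduct_comm, dotProduct_mulVec, ← mulVec_transpose]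
  exact dotProduct_comm _ _

private lemma psd_nonneg {S : Matrix (Fin n) (Fin n) ℝ} (hS : S.PosSemidef) (x : Fin n → ℝ) :
    0 ≤ x ⬝ᵥ S *ᵥ x := by
  have := hS.dotProduct_mulVec_nonneg x; simpa using this

private lemma pd_pos {S : Matrix (Fin n) (Fin n) ℝ} (hS : S.PosDef) {x : Fin n → ℝ} (hx : x ≠ 0) :
    0 < x ⬝ᵥ S *ᵥ x := by
  have := hS.dotProduct_mulVec_pos hx; simpa using this

private lemma sum_mulVec' {k : ℕ} (M : Fin k → Matrix (Fin n) (Fin n) ℝ) (v : Fin n → ℝ) :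
    (∑ j, M j) *ᵥ v = ∑ j, M j *ᵥ v := by
  ext i
  simp [Matrix.mulVec, dotProduct, Matrix.sum_apply, Finset.sum_mul]
  rw [Finset.sum_comm]

private lemma dot_sum' {k : ℕ} (x : Fin n → ℝ) (u : Fin k → Fin n → ℝ) :
    x ⬝ᵥ (∑ j, u j) = ∑ j, x ⬝ᵥ u j := by
  simp [dotProduct, Finset.sum_apply, Finset.mul_sum]
  rw [Finset.sum_comm]

private lemma cs_ineq (S : Matrix (Fin n) (Fin n) ℝ) (hS : S.PosDef) (a b : Fin n → ℝ) :
    (a ⬝ᵥ b) ^ 2 ≤ (a ⬝ᵥ S *ᵥ a) * (b ⬝ᵥ S⁻¹ *ᵥ b) := by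
  have hdet : IsUnit S.det := isUnit_iff_ne_zero.2 hS.det_pos.ne'
  have hsymm : Sᵀ = S := herm_transpose hS.1
  have hinvsymm : (S⁻¹)ᵀ = S⁻¹ := by rw [transpose_nonsing_inv, hsymm]
  set c := S⁻¹ *ᵥ b with hc
  have hSc : S *ᵥ c = b := by rw [hc, mulVec_mulVec, mul_nonsing_inv _ hdet, one_mulVec]
  have hq : ∀ t : ℝ, 0 ≤ (b ⬝ᵥ S⁻¹ *ᵥ b) * (t * t) + (2 * (a ⬝ᵥ b)) * t + (a ⬝ᵥ S *ᵥ a) := by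
    intro t
    have h0 : 0 ≤ (a + t • c) ⬝ᵥ S *ᵥ (a + t • c) := psd_nonneg hS.posSemidef _
    have h1 : a ⬝ᵥ S *ᵥ c = a ⬝ᵥ b := by rw [hSc]
    have h2 : c ⬝ᵥ S *ᵥ a = a ⬝ᵥ b := by rw [dp_symm S hsymm, hSc]
    have h3 : c ⬝ᵥ S *ᵥ c = b ⬝ᵥ S⁻¹ *ᵥ b := by
      rw [hSc, hc, mv_dot, hinvsymm]
    have hexp : (a + t • c) ⬝ᵥ S *ᵥ (a + t • c)
        = (a ⬝ᵥ S *ᵥ a) + t * (a ⬝ᵥ b) + t * (a ⬝ᵥ b) + t * t * (b ⬝ᵥ S⁻¹ *ᵥ b) := by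
      rw [mulVec_add, dotProduct_add, add_dotProduct, add_dotProduct,
        mulVec_smul, dotProduct_smul, smul_dotProduct, smul_dotProduct,
        dotProduct_smul, h1, h2, h3]
      simp [smul_eq_mul]; ring
    rw [hexp] at h0; linarith
  have hd := discrim_le_zero hq
  rw [discrim] at hd
  nlinarith [hd]

private lemma proj_bound (S : Matrix (Fin n) (Fin n) ℝ) (hS : S.PosDef)
    (M : Matrix (Fin m) (Fin n) ℝ) (hSig : (M * S⁻¹ * Mᵀ).PosDef) (e : Fin n → ℝ) :
    (M *ᵥ e) ⬝ᵥ ((M * S⁻¹ * Mᵀ)⁻¹ *ᵥ (M *ᵥ e)) ≤ e ⬝ᵥ S *ᵥ e := by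
  have hGdet : IsUnit (M * S⁻¹ * Mᵀ).det := isUnit_iff_ne_zero.2 hSig.det_pos.ne'
  set z := (M * S⁻¹ * Mᵀ)⁻¹ *ᵥ (M *ᵥ e) with hz
  have hL0 : 0 ≤ (M *ᵥ e) ⬝ᵥ z := by
    rw [hz]; exact psd_nonneg hSig.inv.posSemidef _
  have hGz : (M * S⁻¹ * Mᵀ) *ᵥ z = M *ᵥ e := by
    rw [hz, mulVec_mulVec, mul_nonsing_inv _ hGdet, one_mulVec]
  set b := Mᵀ *ᵥ z with hb
  have hab : e ⬝ᵥ b = (M *ᵥ e) ⬝ᵥ z := (mv_dot M e z).symm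
  have hbSb : b ⬝ᵥ S⁻¹ *ᵥ b = (M *ᵥ e) ⬝ᵥ z := by
    rw [hb, mv_dot, transpose_transpose, mulVec_mulVec, mulVec_mulVec, hGz]
    exact dotProduct_comm _ _
  have hcs := cs_ineq S hS e b
  rw [hab, hbSb] at hcs
  have hEnn : 0 ≤ e ⬝ᵥ S *ᵥ e := psd_nonneg hS.posSemidef e
  rcases hL0.eq_or_lt with h0 | hpos
  · rw [← h0]; exact hEnn
  · have h1 : ((M *ᵥ e) ⬝ᵥ z) * ((M *ᵥ e) ⬝ᵥ z) ≤ (e ⬝ᵥ S *ᵥ e) * ((M *ᵥ e) ⬝ᵥ z) := by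
      nlinarith [hcs]
    exact le_of_mul_le_mul_right h1 hpos

end aux

/-- Aggregated noise-shape matrix `P_σ := ∑ j σ_j⁻² P_j`. -/
noncomputable def Pagg {N n_con : ℕ} (P : Fin n_con → Matrix (Fin N) (Fin N) ℝ)
    (σ : Fin n_con → ℝ) : Matrix (Fin N) (Fin N) ℝ :=
  ∑ j, ((σ j) ^ 2)⁻¹ • P j

/-- Gram matrix `K̂_σ := AᵀA + P_σ⁻¹`. -/
noncomputable def Khat {r N n_con : ℕ} (A : Matrix (Fin r) (Fin N) ℝ)
    (P : Fin n_con → Matrix (Fin N) (Fin N) ℝ) (σ : Fin n_con → ℝ) :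
    Matrix (Fin N) (Fin N) ℝ :=
  Aᵀ * A + (Pagg P σ)⁻¹

/-- Posterior-mean coefficient vector `θ^μ_σ := A K̂_σ⁻¹ y`. -/
noncomputable def θmean {r N n_con : ℕ} (A : Matrix (Fin r) (Fin N) ℝ) (y : Fin N → ℝ)
    (P : Fin n_con → Matrix (Fin N) (Fin N) ℝ) (σ : Fin n_con → ℝ) : Fin r → ℝ :=
  A *ᵥ ((Khat A P σ)⁻¹ *ᵥ y)

/-- Shape matrix `S_σ := I_r + A P_σ Aᵀ`. -/
noncomputable def Smat {r N n_con : ℕ} (A : Matrix (Fin r) (Fin N) ℝ)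
    (P : Fin n_con → Matrix (Fin N) (Fin N) ℝ) (σ : Fin n_con → ℝ) :
    Matrix (Fin r) (Fin r) ℝ :=
  1 + A * Pagg P σ * Aᵀ

/-- Scaling factor `β_σ := √(Γ_f² + ∑ j Γ_{w,j}²/σ_j² − yᵀ K̂_σ⁻¹ y)`. -/
noncomputable def βfac {r N n_con : ℕ} (A : Matrix (Fin r) (Fin N) ℝ) (y : Fin N → ℝ)
    (Γf : ℝ) (Γw : Fin n_con → ℝ) (P : Fin n_con → Matrix (Fin N) (Fin N) ℝ)
    (σ : Fin n_con → ℝ) : ℝ :=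
  Real.sqrt (Γf ^ 2 + ∑ j, (Γw j) ^ 2 / (σ j) ^ 2 - y ⬝ᵥ ((Khat A P σ)⁻¹ *ᵥ y))

/-- The GP-type dual function `F(σ) := qᵀθ^μ_σ + β_σ √(qᵀ S_σ⁻¹ q)`. -/
noncomputable def dualF {r N n_con : ℕ} (A : Matrix (Fin r) (Fin N) ℝ) (y : Fin N → ℝ)
    (q : Fin r → ℝ) (Γf : ℝ) (Γw : Fin n_con → ℝ)
    (P : Fin n_con → Matrix (Fin N) (Fin N) ℝ) (σ : Fin n_con → ℝ) : ℝ :=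
  q ⬝ᵥ θmean A y P σ + βfac A y Γf Γw P σ * Real.sqrt (q ⬝ᵥ ((Smat A P σ)⁻¹ *ᵥ q))

-- quadratic form of Pagg splits into a sum
private lemma pagg_quad {N n_con : ℕ} (P : Fin n_con → Matrix (Fin N) (Fin N) ℝ)
    (σ : Fin n_con → ℝ) (x : Fin N → ℝ) :
    x ⬝ᵥ (Pagg P σ) *ᵥ x = ∑ j, ((σ j) ^ 2)⁻¹ * (x ⬝ᵥ P j *ᵥ x) := by
  rw [Pagg, sum_mulVec', dot_sum']
  refine Finset.sum_congr rfl fun j _ => ?_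
  rw [smul_mulVec, dotProduct_smul, smul_eq_mul]

private lemma pagg_posdef {N n_con : ℕ} (P : Fin n_con → Matrix (Fin N) (Fin N) ℝ)
    (σ : Fin n_con → ℝ) (hP : ∀ j, (P j).PosSemidef) (hPsum : (∑ j, P j).PosDef)
    (hσ : ∀ j, 0 < σ j) : (Pagg P σ).PosDef := by
  have hPjsymm : ∀ j, (P j)ᵀ = P j := fun j => herm_transpose (hP j).1
  refine Matrix.PosDef.of_dotProduct_mulVec_pos ?_ ?_
  · show (Pagg P σ)ᴴ = Pagg P σ
    have ht : (Pagg P σ)ᴴ = (Pagg P σ)ᵀ := by ext i j; simp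
    rw [ht, Pagg, transpose_sum]
    refine Finset.sum_congr rfl fun j _ => ?_
    rw [transpose_smul, hPjsymm]
  · intro x hx
    have hsum : 0 < x ⬝ᵥ (∑ j, P j) *ᵥ x := pd_pos hPsum hx
    rw [sum_mulVec', dot_sum'] at hsum
    have hterm : ∀ j, 0 ≤ x ⬝ᵥ P j *ᵥ x := fun j => psd_nonneg (hP j) x
    obtain ⟨k, hk⟩ : ∃ k, 0 < x ⬝ᵥ P k *ᵥ x := by
      by_contra h; push_neg at h
      have : ∑ j, x ⬝ᵥ P j *ᵥ x ≤ 0 := Finset.sum_nonpos fun j _ => h j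
      linarith
    have hcoef : ∀ j, (0:ℝ) < ((σ j) ^ 2)⁻¹ := fun j => inv_pos.2 (pow_pos (hσ j) 2)
    have hpos : 0 < ∑ j, ((σ j) ^ 2)⁻¹ * (x ⬝ᵥ P j *ᵥ x) := by
      calc (0:ℝ) < ((σ k) ^ 2)⁻¹ * (x ⬝ᵥ P k *ᵥ x) := mul_pos (hcoef k) hk
        _ ≤ _ := Finset.single_le_sum
            (fun j _ => mul_nonneg (hcoef j).le (hterm j)) (Finset.mem_univ k)
    have : 0 < x ⬝ᵥ (Pagg P σ) *ᵥ x := by rw [pagg_quad]; exact hpos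
    simpa using this

/-- Corollary 1 (finite-dimensional form): distribution-free ellipsoidal uncertainty bound
for the multivariate prediction `Mθ`, valid for every positive noise-parameter vector `σ`. -/
theorem ellipsoidal_bound_multivariate
    (r N n_f n_con : ℕ) (hn : 1 ≤ n_con)
    (A : Matrix (Fin r) (Fin N) ℝ) (y : Fin N → ℝ)
    (Γf : ℝ) (hΓf : 0 < Γf)
    (Γw : Fin n_con → ℝ) (hΓw : ∀ j, 0 < Γw j)
    (P : Fin n_con → Matrix (Fin N) (Fin N) ℝ)
    (hP : ∀ j, (P j).PosSemidef)
    (hPsum : (∑ j, P j).PosDef)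
    (M : Matrix (Fin n_f) (Fin r) ℝ)
    (σ : Fin n_con → ℝ) (hσ : ∀ j, 0 < σ j)
    (hSig : (M * (Smat A P σ)⁻¹ * Mᵀ).PosDef)
    (θ : Fin r → ℝ)
    (hθf : θ ⬝ᵥ θ ≤ Γf ^ 2)
    (hθw : ∀ j, (y - Aᵀ *ᵥ θ) ⬝ᵥ (P j *ᵥ (y - Aᵀ *ᵥ θ)) ≤ (Γw j) ^ 2) :
    (M *ᵥ θ - M *ᵥ θmean A y P σ) ⬝ᵥ
        ((M * (Smat A P σ)⁻¹ * Mᵀ)⁻¹ *ᵥ (M *ᵥ θ - M *ᵥ θmean A y P σ))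
      ≤ (βfac A y Γf Γw P σ) ^ 2 := by
  -- abbreviations
  set Pa := Pagg P σ with hPa_def
  set K := Khat A P σ with hK_def
  set S := Smat A P σ with hS_def
  set μ := θmean A y P σ with hμ_def
  have hKeq : K = Aᵀ * A + Pa⁻¹ := by rw [hK_def, Khat, hPa_def]
  have hSeq : S = 1 + A * Pa * Aᵀ := by rw [hS_def, Smat, hPa_def]
  -- positive definiteness
  have hPaPD : Pa.PosDef := by rw [hPa_def]; exact pagg_posdef P σ hP hPsum hσ
  have hPadet : IsUnit Pa.det := isUnit_iff_ne_zero.2 hPaPD.det_pos.ne'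
  have hAh : Aᴴ = Aᵀ := by ext i j; simp
  have hKPD : K.PosDef := by
    rw [hKeq]
    have h1 : (Aᵀ * A).PosSemidef := by
      have := posSemidef_conjTranspose_mul_self A; rwa [hAh] at this
    have h2 : (Pa⁻¹).PosDef := hPaPD.inv
    rw [add_comm]
    exact h2.add_posSemidef h1
  have hKdet : IsUnit K.det := isUnit_iff_ne_zero.2 hKPD.det_pos.ne'
  have hSPD : S.PosDef := by
    rw [hSeq]
    have h1 : (A * Pa * Aᵀ).PosSemidef := by
      have := hPaPD.posSemidef.mul_mul_conjTranspose_same A; rwa [hAh] at this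
    exact Matrix.PosDef.one.add_posSemidef h1
  -- symmetry facts
  have hPsymm : Paᵀ = Pa := herm_transpose hPaPD.1
  have hST : Sᵀ = S := herm_transpose hSPD.1
  have hKT : Kᵀ = K := herm_transpose hKPD.1
  have hKinvT : (K⁻¹)ᵀ = K⁻¹ := by rw [transpose_nonsing_inv, hKT]
  -- key matrix identities
  have hPP : Pa * Pa⁻¹ = 1 := mul_nonsing_inv _ hPadet
  have h1 : A * Pa * K = S * A := by
    rw [hKeq, hSeq, Matrix.mul_add, Matrix.mul_assoc A Pa Pa⁻¹, hPP, Matrix.mul_one]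
    rw [Matrix.add_mul, Matrix.one_mul, ← Matrix.mul_assoc, add_comm]
  have h2 : S * A * K⁻¹ = A * Pa := by
    rw [← h1, Matrix.mul_assoc, mul_nonsing_inv _ hKdet, Matrix.mul_one]
  have h3 : K⁻¹ * (Aᵀ * (A * Pa)) = Pa - K⁻¹ := by
    have e0 : K * Pa = Aᵀ * (A * Pa) + 1 := by
      rw [hKeq, Matrix.add_mul, nonsing_inv_mul _ hPadet, Matrix.mul_assoc]
    have e1 : K⁻¹ * (K * Pa) = Pa := by
      rw [← Matrix.mul_assoc, nonsing_inv_mul _ hKdet, Matrix.one_mul]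
    rw [e0, Matrix.mul_add, Matrix.mul_one] at e1
    exact eq_sub_of_add_eq e1
  -- posterior mean facts
  have hθμ : μ = (A * K⁻¹) *ᵥ y := by rw [hμ_def, θmean, ← hK_def, mulVec_mulVec]
  have hSμ : S *ᵥ μ = (A * Pa) *ᵥ y := by
    rw [hθμ, mulVec_mulVec, ← Matrix.mul_assoc, h2]
  have hkey2 : μ ⬝ᵥ S *ᵥ μ = y ⬝ᵥ Pa *ᵥ y - y ⬝ᵥ K⁻¹ *ᵥ y := by
    rw [hSμ, hθμ, mv_dot, mulVec_mulVec]
    have hm : (A * K⁻¹)ᵀ * (A * Pa) = Pa - K⁻¹ := by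
      rw [transpose_mul, hKinvT, Matrix.mul_assoc, h3]
    rw [hm, sub_mulVec, dotProduct_sub]
  -- quadratic identity
  have hθSθ : θ ⬝ᵥ S *ᵥ θ = θ ⬝ᵥ θ + θ ⬝ᵥ (A * Pa * Aᵀ) *ᵥ θ := by
    rw [hSeq, add_mulVec, one_mulVec, dotProduct_add]
  have hμSθ : μ ⬝ᵥ S *ᵥ θ = θ ⬝ᵥ ((A * Pa) *ᵥ y) := by
    rw [dp_symm S hST, hSμ]
  have hθSμ : θ ⬝ᵥ S *ᵥ μ = θ ⬝ᵥ ((A * Pa) *ᵥ y) := by rw [hSμ]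
  have hwA : (Aᵀ *ᵥ θ) ⬝ᵥ Pa *ᵥ y = θ ⬝ᵥ ((A * Pa) *ᵥ y) := by
    rw [mv_dot, transpose_transpose, mulVec_mulVec]
  have hyPAθ : y ⬝ᵥ Pa *ᵥ (Aᵀ *ᵥ θ) = θ ⬝ᵥ ((A * Pa) *ᵥ y) := by
    rw [dp_symm Pa hPsymm, hwA]
  have hAθPA : (Aᵀ *ᵥ θ) ⬝ᵥ Pa *ᵥ (Aᵀ *ᵥ θ) = θ ⬝ᵥ (A * Pa * Aᵀ) *ᵥ θ := by
    rw [mv_dot, transpose_transpose, mulVec_mulVec, mulVec_mulVec]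
  have lhs_exp : (θ - μ) ⬝ᵥ S *ᵥ (θ - μ)
      = θ ⬝ᵥ S *ᵥ θ - θ ⬝ᵥ S *ᵥ μ - μ ⬝ᵥ S *ᵥ θ + μ ⬝ᵥ S *ᵥ μ := by
    rw [mulVec_sub, sub_dotProduct, dotProduct_sub, dotProduct_sub]; ring
  have rhs_exp : (y - Aᵀ *ᵥ θ) ⬝ᵥ Pa *ᵥ (y - Aᵀ *ᵥ θ)
      = y ⬝ᵥ Pa *ᵥ y - y ⬝ᵥ Pa *ᵥ (Aᵀ *ᵥ θ) - (Aᵀ *ᵥ θ) ⬝ᵥ Pa *ᵥ y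
        + (Aᵀ *ᵥ θ) ⬝ᵥ Pa *ᵥ (Aᵀ *ᵥ θ) := by
    rw [mulVec_sub, sub_dotProduct, dotProduct_sub, dotProduct_sub]; ring
  have hquadid : (θ - μ) ⬝ᵥ S *ᵥ (θ - μ)
      = θ ⬝ᵥ θ + (y - Aᵀ *ᵥ θ) ⬝ᵥ Pa *ᵥ (y - Aᵀ *ᵥ θ) - y ⬝ᵥ K⁻¹ *ᵥ y := by
    rw [lhs_exp, hθSθ, hθSμ, hμSθ, hkey2, rhs_exp, hwA, hyPAθ, hAθPA]; ring
  -- feasibility bound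
  have hwbound : (y - Aᵀ *ᵥ θ) ⬝ᵥ Pa *ᵥ (y - Aᵀ *ᵥ θ) ≤ ∑ j, (Γw j) ^ 2 / (σ j) ^ 2 := by
    rw [hPa_def, pagg_quad]
    refine Finset.sum_le_sum fun j _ => ?_
    rw [div_eq_inv_mul]
    exact mul_le_mul_of_nonneg_left (hθw j) (inv_pos.2 (pow_pos (hσ j) 2)).le
  have hc : (θ - μ) ⬝ᵥ S *ᵥ (θ - μ)
      ≤ Γf ^ 2 + (∑ j, (Γw j) ^ 2 / (σ j) ^ 2) - y ⬝ᵥ K⁻¹ *ᵥ y := by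
    rw [hquadid]; linarith
  have hEnn : 0 ≤ (θ - μ) ⬝ᵥ S *ᵥ (θ - μ) := psd_nonneg hSPD.posSemidef _
  have hcnn : 0 ≤ Γf ^ 2 + (∑ j, (Γw j) ^ 2 / (σ j) ^ 2) - y ⬝ᵥ K⁻¹ *ᵥ y :=
    le_trans hEnn hc
  have hβ : (βfac A y Γf Γw P σ) ^ 2
      = Γf ^ 2 + (∑ j, (Γw j) ^ 2 / (σ j) ^ 2) - y ⬝ᵥ K⁻¹ *ᵥ y := by
    rw [βfac, ← hK_def]; exact Real.sq_sqrt hcnn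
  rw [← mulVec_sub, hβ]
  exact le_trans (proj_bound S hSPD M hSig (θ - μ)) hc
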